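/- Let G be the group with presentation ⟨v₁,v₂,h | v₁hv₁⁻¹h⁻¹, v₂hv₂⁻¹h, v₁²v₂²⟩ (the fundamental group of N₃). Then there are exactly 7 surjective homomorphisms G → ℤ/2, and the map v₁ ↦ v₁, v₂ ↦ v₂h, h ↦ h extends to an automorphism θ of G satisfying φ₁ ∘ θ = φ₂, where (φ₁(v₁),φ₁(v₂),φ₁(h))=(1,1,1) and (φ₂(v₁),φ₂(v₂),φ₂(h))=(1,0,1). -/

import Mathlib

open FreeGroup

/-- Relators of π₁(N₃) = ⟨v₁,v₂,h | v₁hv₁⁻¹h⁻¹, v₂hv₂⁻¹h, v₁²v₂²⟩,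
generators v₁=0, v₂=1, h=2. -/
def relsN3 : Set (FreeGroup (Fin 3)) :=
  { of 0 * of 2 * (of 0)⁻¹ * (of 2)⁻¹,
    of 1 * of 2 * (of 1)⁻¹ * of 2,
    of 0 ^ 2 * of 1 ^ 2 }

/-- Reduction mod 2, multiplicatively. -/
def mod2 : Multiplicative ℤ →* Multiplicative (ZMod 2) :=
  AddMonoidHom.toMultiplicative (Int.castAddHom (ZMod 2))

abbrev K2 := Multiplicative (ZMod 2)

lemma sq_one : ∀ x : K2, x * x = 1 := by decide

lemma relsCheck (f : Fin 3 → K2) : ∀ r ∈ relsN3, FreeGroup.lift f r = 1 := by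
  intro r hr
  rcases hr with h | h | h <;> subst h <;>
    simp only [_root_.map_mul, _root_.map_inv, _root_.map_pow, FreeGroup.lift_apply_of]
  · rw [mul_right_comm, mul_inv_cancel_right, mul_inv_cancel]
  · rw [mul_right_comm, mul_assoc (f 1), sq_one, mul_one, mul_inv_cancel]
  · rw [pow_two, pow_two, sq_one, sq_one, one_mul]

noncomputable def homEquiv : (PresentedGroup relsN3 →* K2) ≃ (Fin 3 → K2) where
  toFun φ i := φ (PresentedGroup.of i)
  invFun f := PresentedGroup.toGroup (relsCheck f)
  left_inv φ := PresentedGroup.ext fun i => by rw [PresentedGroup.toGroup.of]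
  right_inv f := funext fun i => PresentedGroup.toGroup.of _

lemma surj_iff (φ : PresentedGroup relsN3 →* K2) :
    Function.Surjective φ ↔ (fun i => φ (PresentedGroup.of i)) ≠ fun _ => (1 : K2) := by
  constructor
  · intro hs he
    have hφ : φ = 1 := PresentedGroup.ext fun i => congrFun he i
    obtain ⟨g, hg⟩ := hs (Multiplicative.ofAdd (1 : ZMod 2))
    rw [hφ, MonoidHom.one_apply] at hg
    exact absurd hg (by decide)
  · intro hne y
    have hex : ∃ i, φ (PresentedGroup.of i) ≠ 1 := by
      by_contra h
      push_neg at h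
      exact hne (funext h)
    obtain ⟨i, hi⟩ := hex
    have hy : y = 1 ∨ y = φ (PresentedGroup.of i) := by
      have key : ∀ u v : K2, v ≠ 1 → u = 1 ∨ u = v := by decide
      exact key y _ hi
    rcases hy with h | h
    · exact ⟨1, by simp [h]⟩
    · exact ⟨PresentedGroup.of i, h.symm⟩

lemma card_seven :
    Nat.card {φ : PresentedGroup relsN3 →* K2 // Function.Surjective φ} = 7 := by
  have e : {φ : PresentedGroup relsN3 →* K2 // Function.Surjective φ} ≃
      {f : Fin 3 → K2 // f ≠ fun _ => 1} :=
    homEquiv.subtypeEquiv fun φ => surj_iff φ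
  rw [Nat.card_congr e, Nat.card_eq_fintype_card]
  decide

lemma relG {r : FreeGroup (Fin 3)} (hr : r ∈ relsN3) :
    (QuotientGroup.mk r : PresentedGroup relsN3) = 1 :=
  (QuotientGroup.eq_one_iff r).2 (Subgroup.subset_normalClosure hr)

local notation "gA" => (PresentedGroup.of 0 : PresentedGroup relsN3)
local notation "gB" => (PresentedGroup.of 1 : PresentedGroup relsN3)
local notation "gC" => (PresentedGroup.of 2 : PresentedGroup relsN3)

lemma rel1 : gA * gC * (gA)⁻¹ * (gC)⁻¹ = 1 := relG (Or.inl rfl)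
lemma rel2 : gB * gC * (gB)⁻¹ * gC = 1 := relG (Or.inr (Or.inl rfl))
lemma rel3 : gA ^ 2 * gB ^ 2 = 1 := relG (Or.inr (Or.inr rfl))

lemma hbc : gB * gC = (gC)⁻¹ * gB := by
  have h : gB * gC * (gB)⁻¹ = (gC)⁻¹ := mul_eq_one_iff_eq_inv.mp rel2
  rw [← h]; group

lemma hbc' : gB * (gC)⁻¹ = gC * gB := by
  have h : gC * gB = gC * (gB * gC) * (gC)⁻¹ := by group
  rw [h, hbc]; group

lemma relsCheckF : ∀ r ∈ relsN3,
    FreeGroup.lift (![gA, gB * gC, gC] : Fin 3 → PresentedGroup relsN3) r = 1 := by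
  intro r hr
  rcases hr with h | h | h <;> subst h <;>
    simp only [_root_.map_mul, _root_.map_inv, _root_.map_pow, FreeGroup.lift_apply_of,
      Matrix.cons_val_zero, Matrix.cons_val_one, Matrix.head_cons, Matrix.cons_val_two,
      Matrix.tail_cons]
  · exact rel1
  · calc gB * gC * gC * (gB * gC)⁻¹ * gC = gB * gC * (gB)⁻¹ * gC := by group
      _ = 1 := rel2
  · rw [pow_two, pow_two, hbc]
    have e1 : gA * gA * ((gC)⁻¹ * gB * ((gC)⁻¹ * gB)) =
        gA * gA * ((gC)⁻¹ * (gB * (gC)⁻¹) * gB) := by group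
    rw [e1, hbc']
    have e2 : gA * gA * ((gC)⁻¹ * (gC * gB) * gB) = gA ^ 2 * gB ^ 2 := by
      simp [pow_two, mul_assoc]
    rw [e2]; exact rel3

lemma relsCheckG : ∀ r ∈ relsN3,
    FreeGroup.lift (![gA, gB * (gC)⁻¹, gC] : Fin 3 → PresentedGroup relsN3) r = 1 := by
  intro r hr
  rcases hr with h | h | h <;> subst h <;>
    simp only [_root_.map_mul, _root_.map_inv, _root_.map_pow, FreeGroup.lift_apply_of,
      Matrix.cons_val_zero, Matrix.cons_val_one, Matrix.head_cons, Matrix.cons_val_two,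
      Matrix.tail_cons]
  · exact rel1
  · calc gB * (gC)⁻¹ * gC * (gB * (gC)⁻¹)⁻¹ * gC = gB * gC * (gB)⁻¹ * gC := by group
      _ = 1 := rel2
  · rw [pow_two, pow_two, hbc']
    have e1 : gA * gA * (gC * gB * (gC * gB)) = gA * gA * (gC * (gB * gC) * gB) := by group
    rw [e1, hbc]
    have e2 : gA * gA * (gC * ((gC)⁻¹ * gB) * gB) = gA ^ 2 * gB ^ 2 := by
      simp [pow_two, mul_assoc]
    rw [e2]; exact rel3

noncomputable def θf : PresentedGroup relsN3 →* PresentedGroup relsN3 :=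
  PresentedGroup.toGroup relsCheckF

noncomputable def θg : PresentedGroup relsN3 →* PresentedGroup relsN3 :=
  PresentedGroup.toGroup relsCheckG

lemma θf_of (i : Fin 3) : θf (PresentedGroup.of i) = ![gA, gB * gC, gC] i :=
  PresentedGroup.toGroup.of _

lemma θg_of (i : Fin 3) : θg (PresentedGroup.of i) = ![gA, gB * (gC)⁻¹, gC] i :=
  PresentedGroup.toGroup.of _

lemma θgf : θg.comp θf = MonoidHom.id _ :=
  PresentedGroup.ext fun i => by
    fin_cases i <;>
      simp [θf_of, θg_of, _root_.map_mul, mul_inv_cancel_right]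

lemma θfg : θf.comp θg = MonoidHom.id _ :=
  PresentedGroup.ext fun i => by
    fin_cases i <;>
      simp [θf_of, θg_of, _root_.map_mul, _root_.map_inv, mul_inv_cancel_right]

noncomputable def θ : PresentedGroup relsN3 ≃* PresentedGroup relsN3 :=
  MonoidHom.toMulEquiv θf θg θgf θfg

/-- There are exactly 7 epimorphisms π₁(N₃) → ℤ/2, and the map v₁ ↦ v₁,
v₂ ↦ v₂h, h ↦ h extends to an automorphism θ with φ₁ ∘ θ = φ₂, where φ₁, φ₂
have values (1,1,1) resp. (1,0,1) on (v₁,v₂,h). -/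
theorem stmt17 :
    Nat.card {φ : PresentedGroup relsN3 →* Multiplicative (ZMod 2) //
        Function.Surjective φ} = 7 ∧
    ∃ θ : PresentedGroup relsN3 ≃* PresentedGroup relsN3,
      θ (PresentedGroup.of 0) = PresentedGroup.of 0 ∧
      θ (PresentedGroup.of 1) = PresentedGroup.of 1 * PresentedGroup.of 2 ∧
      θ (PresentedGroup.of 2) = PresentedGroup.of 2 ∧
      ∀ φ₁ φ₂ : PresentedGroup relsN3 →* Multiplicative (ZMod 2),
        φ₁ (PresentedGroup.of 0) = Multiplicative.ofAdd (1 : ZMod 2) →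
        φ₁ (PresentedGroup.of 1) = Multiplicative.ofAdd (1 : ZMod 2) →
        φ₁ (PresentedGroup.of 2) = Multiplicative.ofAdd (1 : ZMod 2) →
        φ₂ (PresentedGroup.of 0) = Multiplicative.ofAdd (1 : ZMod 2) →
        φ₂ (PresentedGroup.of 1) = Multiplicative.ofAdd (0 : ZMod 2) →
        φ₂ (PresentedGroup.of 2) = Multiplicative.ofAdd (1 : ZMod 2) →
        φ₁.comp θ.toMonoidHom = φ₂ := by
  refine ⟨card_seven, θ, θf_of 0, θf_of 1, θf_of 2, ?_⟩
  intro φ₁ φ₂ h10 h11 h12 h20 h21 h22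
  refine PresentedGroup.ext fun i => ?_
  fin_cases i
  · show φ₁ (θf (PresentedGroup.of 0)) = φ₂ (PresentedGroup.of 0)
    rw [θf_of, Matrix.cons_val_zero, h10, h20]
  · show φ₁ (θf (PresentedGroup.of 1)) = φ₂ (PresentedGroup.of 1)
    rw [θf_of]
    simp only [Matrix.cons_val_one, Matrix.cons_val_zero, Matrix.head_cons, _root_.map_mul, h11, h12, h21]
    decide
  · show φ₁ (θf (PresentedGroup.of 2)) = φ₂ (PresentedGroup.of 2)
    rw [θf_of]
    simp only [Matrix.cons_val_two, Matrix.tail_cons, Matrix.head_cons, h12, h22]
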